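/- Let ξ₁, ξ₂ be nonnegative random variables on a common probability space with E[ξ₁] = E[ξ₂] = m > 0, E[ξ₁²] ∨ E[ξ₂²] ≤ 1/ε², and E|ξ₁ − ξ₂| ≥ ε for some ε ∈ (0, 1). Then, setting η = min(ε⁴/(4(1 + 2m)), ε/2), one has P(|ξ₁ − ξ₂| ≥ η and max(ξ₁, ξ₂) ≤ 1/η) ≥ η. -/

import Mathlib

open Set MeasureTheory
open scoped ENNReal

/-- Quantitative separation of two coupled nonnegative random variables with common
mean `m > 0`, second moments bounded by `1/ε²` (also for the difference), and
`E|ξ₁ − ξ₂| ≥ ε`: with `η = min(ε⁴/(4(1 + 2m)), ε/2)`, the event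
`{|ξ₁ − ξ₂| ≥ η and max(ξ₁, ξ₂) ≤ 1/η}` has probability at least `η`. -/
theorem coupling_separation_probability {Ω : Type*} [MeasureSpace Ω]
    [IsProbabilityMeasure (volume : Measure Ω)]
    (ξ₁ ξ₂ : Ω → ℝ) (h1meas : Measurable ξ₁) (h2meas : Measurable ξ₂)
    (h1nn : ∀ ω, 0 ≤ ξ₁ ω) (h2nn : ∀ ω, 0 ≤ ξ₂ ω)
    (h1sq : MemLp ξ₁ 2 (volume : Measure Ω)) (h2sq : MemLp ξ₂ 2 (volume : Measure Ω))
    (m ε : ℝ) (hm : 0 < m) (hε0 : 0 < ε) (hε1 : ε < 1)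
    (hmean1 : (∫ ω, ξ₁ ω) = m) (hmean2 : (∫ ω, ξ₂ ω) = m)
    (hsq1 : (∫ ω, ξ₁ ω ^ 2) ≤ 1 / ε ^ 2) (hsq2 : (∫ ω, ξ₂ ω ^ 2) ≤ 1 / ε ^ 2)
    (hsqdiff : (∫ ω, |ξ₁ ω - ξ₂ ω| ^ 2) ≤ 1 / ε ^ 2)
    (hdiff : ε ≤ ∫ ω, |ξ₁ ω - ξ₂ ω|) :
    min (ε ^ 4 / (4 * (1 + 2 * m))) (ε / 2) ≤
      ((volume : Measure Ω) {ω |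
        min (ε ^ 4 / (4 * (1 + 2 * m))) (ε / 2) ≤ |ξ₁ ω - ξ₂ ω| ∧
        max (ξ₁ ω) (ξ₂ ω) ≤ 1 / min (ε ^ 4 / (4 * (1 + 2 * m))) (ε / 2)}).toReal := by
  set η : ℝ := min (ε ^ 4 / (4 * (1 + 2 * m))) (ε / 2) with hη_def
  have hη1 : η ≤ ε ^ 4 / (4 * (1 + 2 * m)) := min_le_left _ _
  have hη2 : η ≤ ε / 2 := min_le_right _ _
  have hηpos : 0 < η := lt_min (by positivity) (by positivity)
  set Δ : Ω → ℝ := fun ω => |ξ₁ ω - ξ₂ ω| with hΔ_def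
  have hΔmeas : Measurable Δ := (h1meas.sub h2meas).abs
  have hΔnn : ∀ ω, 0 ≤ Δ ω := fun ω => abs_nonneg _
  have hΔsq : MemLp Δ 2 (volume : Measure Ω) := by
    have := (h1sq.sub h2sq).norm
    simpa [hΔ_def, Real.norm_eq_abs] using this
  have hΔint : Integrable Δ := hΔsq.integrable one_le_two
  have hΔsqint : Integrable (fun ω => Δ ω ^ 2) := hΔsq.integrable_sq
  -- the sets
  set S : Set Ω := {ω | η ≤ Δ ω} with hS_def
  have hSmeas : MeasurableSet S := measurableSet_le measurable_const hΔmeas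
  set T : Set Ω := {ω | 1 / η ≤ ξ₁ ω + ξ₂ ω} with hT_def
  set E : Set Ω := {ω | η ≤ Δ ω ∧ max (ξ₁ ω) (ξ₂ ω) ≤ 1 / η} with hE_def
  have hEmeas : MeasurableSet E := by
    refine MeasurableSet.inter (measurableSet_le measurable_const hΔmeas) ?_
    exact measurableSet_le (h1meas.max h2meas) measurable_const
  -- Step 1: Cauchy–Schwarz gives (μ S).toReal ≥ ε⁴/4
  have hμS : ε ^ 4 / 4 ≤ (volume S).toReal := by
    have hconj : Real.HolderConjugate 2 2 := Real.HolderConjugate.two_two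
    have hind : MemLp (S.indicator (fun _ => (1 : ℝ))) (ENNReal.ofReal 2)
        (volume : Measure Ω) := (memLp_const (1 : ℝ)).indicator hSmeas
    have hΔsq' : MemLp Δ (ENNReal.ofReal 2) (volume : Measure Ω) := by
      have : (ENNReal.ofReal 2) = 2 := by norm_num
      rw [this]; exact hΔsq
    have hCS := integral_mul_le_Lp_mul_Lq_of_nonneg (μ := (volume : Measure Ω)) hconj
      (Filter.Eventually.of_forall hΔnn)
      (Filter.Eventually.of_forall (fun ω => Set.indicator_nonneg (fun _ _ => zero_le_one) ω))
      hΔsq' hind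
    have hL : (∫ ω, Δ ω * S.indicator (fun _ => (1:ℝ)) ω) = ∫ ω, S.indicator Δ ω := by
      refine integral_congr_ae (Filter.Eventually.of_forall fun ω => ?_)
      by_cases h : ω ∈ S <;> simp [Set.indicator_of_mem, Set.indicator_of_notMem, h]
    have hR1 : (∫ ω, Δ ω ^ (2:ℝ)) = ∫ ω, Δ ω ^ 2 := by
      refine integral_congr_ae (Filter.Eventually.of_forall fun ω => ?_)
      show Δ ω ^ (2:ℝ) = Δ ω ^ (2:ℕ)
      rw [← Real.rpow_natCast (Δ ω) 2]
      norm_num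
    have hR2 : (∫ ω, S.indicator (fun _ => (1:ℝ)) ω ^ (2:ℝ)) = (volume S).toReal := by
      have : (∫ ω, S.indicator (fun _ => (1:ℝ)) ω ^ (2:ℝ))
          = ∫ ω, S.indicator (fun _ => (1:ℝ)) ω := by
        refine integral_congr_ae (Filter.Eventually.of_forall fun ω => ?_)
        by_cases h : ω ∈ S <;>
          simp [Set.indicator_of_mem, Set.indicator_of_notMem, h, Real.rpow_natCast]
      rw [this, integral_indicator_const _ hSmeas]; simp [Measure.real]
    rw [hL, hR1, hR2] at hCS
    -- pointwise: Δ ω ≤ η + S.indicator Δ ω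
    have hpt : (∫ ω, Δ ω) ≤ η + ∫ ω, S.indicator Δ ω := by
      have : (∫ ω, Δ ω) ≤ ∫ ω, (η + S.indicator Δ ω) := by
        refine integral_mono hΔint ((integrable_const η).add (hΔint.indicator hSmeas))
          fun ω => ?_
        by_cases h : ω ∈ S
        · simp only [Set.indicator_of_mem h]
          linarith [hηpos.le]
        · simp only [Set.indicator_of_notMem h]
          have : Δ ω < η := lt_of_not_ge h
          linarith
      rwa [integral_add (integrable_const η) (hΔint.indicator hSmeas),
        integral_const, probReal_univ, smul_eq_mul, one_mul] at this
    have hsqb : (∫ ω, Δ ω ^ 2) ^ ((1:ℝ)/2) ≤ 1 / ε := by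
      have hnn : 0 ≤ ∫ ω, Δ ω ^ 2 := integral_nonneg fun ω => sq_nonneg _
      have : (∫ ω, Δ ω ^ 2) ^ ((1:ℝ)/2) ≤ (1 / ε ^ 2) ^ ((1:ℝ)/2) :=
        Real.rpow_le_rpow hnn hsqdiff (by norm_num)
      calc (∫ ω, Δ ω ^ 2) ^ ((1:ℝ)/2) ≤ (1 / ε ^ 2) ^ ((1:ℝ)/2) := this
        _ = 1 / ε := by
            rw [show (1 / ε ^ 2) = (1/ε) ^ (2:ℕ) by ring, ← Real.rpow_natCast (1/ε) 2,
              ← Real.rpow_mul (by positivity)]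
            norm_num
    -- combine: ε ≤ η + (1/ε) * √P
    have hP : ε - η ≤ (1 / ε) * (volume S).toReal ^ ((1:ℝ)/2) := by
      have h1 : (∫ ω, S.indicator Δ ω) ≤ (1 / ε) * (volume S).toReal ^ ((1:ℝ)/2) := by
        refine le_trans hCS ?_
        have hPnn : (0:ℝ) ≤ (volume S).toReal ^ ((1:ℝ)/2) :=
          Real.rpow_nonneg ENNReal.toReal_nonneg _
        exact mul_le_mul_of_nonneg_right hsqb hPnn
      linarith [le_trans hdiff hpt]
    have hεη : ε / 2 ≤ ε - η := by linarith
    have h2 : ε ^ 2 / 2 ≤ (volume S).toReal ^ ((1:ℝ)/2) := by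
      have := le_trans hεη hP
      have hh : ε * (ε / 2) ≤ ε * ((1 / ε) * (volume S).toReal ^ ((1:ℝ)/2)) :=
        mul_le_mul_of_nonneg_left this hε0.le
      rw [← mul_assoc, mul_one_div, div_self hε0.ne', one_mul] at hh
      nlinarith
    have hPnn : (0:ℝ) ≤ (volume S).toReal := ENNReal.toReal_nonneg
    have hsq' : (ε ^ 2 / 2) ^ 2 ≤ ((volume S).toReal ^ ((1:ℝ)/2)) ^ 2 := by
      have h0 : (0:ℝ) ≤ ε ^ 2 / 2 := by positivity
      exact pow_le_pow_left₀ h0 h2 2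
    have heq : ((volume S).toReal ^ ((1:ℝ)/2)) ^ 2 = (volume S).toReal := by
      rw [← Real.rpow_natCast ((volume S).toReal ^ ((1:ℝ)/2)) 2,
        ← Real.rpow_mul hPnn]
      norm_num
    rw [heq] at hsq'
    nlinarith [hsq']
  -- Step 2: Markov gives (μ T).toReal ≤ 2 m η
  have hμT : (volume T).toReal ≤ 2 * m * η := by
    have hint : Integrable (fun ω => ξ₁ ω + ξ₂ ω) :=
      (h1sq.integrable one_le_two).add (h2sq.integrable one_le_two)
    have hmk := mul_meas_ge_le_integral_of_nonneg (μ := (volume : Measure Ω))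
      (f := fun ω => ξ₁ ω + ξ₂ ω)
      (Filter.Eventually.of_forall fun ω => add_nonneg (h1nn ω) (h2nn ω)) hint (1 / η)
    have hintval : (∫ ω, (ξ₁ ω + ξ₂ ω)) = 2 * m := by
      rw [integral_add (h1sq.integrable one_le_two) (h2sq.integrable one_le_two),
        hmean1, hmean2]; ring
    rw [hintval] at hmk
    have hmk' : (1 / η) * (volume T).toReal ≤ 2 * m := hmk
    rw [div_mul_eq_mul_div, one_mul, div_le_iff₀ hηpos] at hmk'
    exact hmk'
  -- Step 3: combine.  S ⊆ E ∪ T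
  have hsub : S ⊆ E ∪ T := by
    intro ω hω
    by_cases h : max (ξ₁ ω) (ξ₂ ω) ≤ 1 / η
    · exact Or.inl ⟨hω, h⟩
    · right
      have hmax : 1 / η < max (ξ₁ ω) (ξ₂ ω) := lt_of_not_ge h
      have : max (ξ₁ ω) (ξ₂ ω) ≤ ξ₁ ω + ξ₂ ω :=
        max_le (by linarith [h2nn ω]) (by linarith [h1nn ω])
      exact le_of_lt (lt_of_lt_of_le hmax this)
  have hμSE : (volume S).toReal ≤ (volume E).toReal + (volume T).toReal := by
    have h1 : volume S ≤ volume E + volume T :=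
      le_trans (measure_mono hsub) (measure_union_le E T)
    have h2 : (volume S).toReal ≤ (volume E + volume T).toReal :=
      ENNReal.toReal_mono (ENNReal.add_ne_top.2 ⟨measure_ne_top _ _, measure_ne_top _ _⟩) h1
    rwa [ENNReal.toReal_add (measure_ne_top _ _) (measure_ne_top _ _)] at h2
  -- final arithmetic
  have harith : η + 2 * m * η ≤ ε ^ 4 / 4 := by
    have h1 : (0:ℝ) < 1 + 2 * m := by linarith
    have h2 : η ≤ ε ^ 4 / 4 / (1 + 2 * m) := by
      calc η ≤ ε ^ 4 / (4 * (1 + 2 * m)) := hη1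
        _ = ε ^ 4 / 4 / (1 + 2 * m) := by rw [div_div]
    have h3 : η * (1 + 2 * m) ≤ ε ^ 4 / 4 := (le_div_iff₀ h1).mp h2
    linarith
  have : η ≤ (volume E).toReal := by linarith
  exact this
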